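/- Let p be an odd prime, u a quadratic non-residue mod p, r ≥ 1, and 0 ≤ s ≤ r. Let q(x) = (p^r+1)x²/(2p^r) on ℤ/p^rℤ. Then Θ(ℤ/p^rℤ, p^s q) = (-1)^{r-s} Θ(ℤ/p^rℤ, u p^s q), where Θ(G,q) = |G|^{-1/2} ∑_{x∈G} e^{2πi q(x)}. -/

import Mathlib

open Finset Complex

noncomputable def ee (n : ℕ) (t : ℤ) : ℂ := Complex.exp (2 * Real.pi * Complex.I * t / n)

lemma ee_add (n : ℕ) (a b : ℤ) : ee n (a + b) = ee n a * ee n b := by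
  rw [ee, ee, ee, ← Complex.exp_add]
  congr 1
  push_cast
  ring

lemma ee_mul_self (n : ℕ) (hn : n ≠ 0) (t : ℤ) : ee n ((n : ℤ) * t) = 1 := by
  have hn' : (n : ℂ) ≠ 0 := Nat.cast_ne_zero.mpr hn
  have h2 : 2 * (Real.pi : ℂ) * Complex.I * ((((n : ℤ) * t) : ℤ) : ℂ) / (n : ℂ)
      = (t : ℂ) * (2 * Real.pi * Complex.I) := by
    push_cast
    field_simp
  rw [ee, h2, Complex.exp_int_mul_two_pi_mul_I]

lemma ee_congr (n : ℕ) (hn : n ≠ 0) {a b : ℤ} (h : (n : ℤ) ∣ a - b) : ee n a = ee n b := by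
  obtain ⟨k, hk⟩ := h
  have : a = b + n * k := by linarith
  rw [this, ee_add, ee_mul_self n hn, mul_one]

lemma ee_cancel (a b : ℕ) (hb : b ≠ 0) (t : ℤ) : ee (a * b) (t * b) = ee a t := by
  rcases Nat.eq_zero_or_pos a with h | h
  · subst h
    simp [ee]
  · have ha' : (a : ℂ) ≠ 0 := Nat.cast_ne_zero.mpr h.ne'
    have hb' : (b : ℂ) ≠ 0 := Nat.cast_ne_zero.mpr hb
    rw [ee, ee]
    congr 1
    push_cast
    field_simp

lemma two_pi_I_ne : (2 * (Real.pi:ℂ) * Complex.I) ≠ 0 := by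
  have hpi : (Real.pi : ℂ) ≠ 0 := by exact_mod_cast Real.pi_ne_zero
  simp [hpi, Complex.I_ne_zero]

lemma ee_geom (p : ℕ) (hp : p.Prime) (d : ℤ) :
    ∑ z ∈ range p, ee p (d * z) = if (p : ℤ) ∣ d then (p : ℂ) else 0 := by
  have hxz : ∀ z : ℕ, ee p (d * z) = (ee p d) ^ z := by
    intro z
    rw [ee, ee, ← Complex.exp_nat_mul]
    congr 1
    push_cast
    ring
  split_ifs with h
  · obtain ⟨k, hk⟩ := h
    have h1 : ∀ z ∈ range p, ee p (d * z) = 1 := by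
      intro z _
      rw [hk, show (p:ℤ) * k * z = (p:ℤ) * (k * z) by ring, ee_mul_self p hp.pos.ne']
    rw [Finset.sum_congr rfl h1]
    simp
  · have hne : ee p d ≠ 1 := by
      intro hcon
      rw [ee, Complex.exp_eq_one_iff] at hcon
      obtain ⟨k, hk⟩ := hcon
      have hpc : (p : ℂ) ≠ 0 := Nat.cast_ne_zero.mpr hp.pos.ne'
      have hd : (d : ℂ) = k * p := by
        push_cast at hk
        field_simp at hk
        have h2 : (2 * (Real.pi:ℂ) * Complex.I) * d = (2 * (Real.pi:ℂ) * Complex.I) * (k * p) := by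
          linear_combination (2 * (Real.pi:ℂ) * Complex.I) * hk
        exact mul_left_cancel₀ two_pi_I_ne h2
      exact h ⟨k, by
        have h3 : (d:ℂ) = (((p : ℤ) * k : ℤ) : ℂ) := hd.trans (by push_cast; ring)
        exact_mod_cast h3⟩
    calc ∑ z ∈ range p, ee p (d * z) = ∑ z ∈ range p, (ee p d) ^ z :=
          Finset.sum_congr rfl fun z _ => hxz z
      _ = ((ee p d) ^ p - 1) / (ee p d - 1) := geom_sum_eq hne p
      _ = 0 := by
          rw [← hxz p, mul_comm d (p:ℤ), ee_mul_self p hp.pos.ne']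
          simp

lemma sum_range_mul (f : ℕ → ℂ) (a b : ℕ) :
    ∑ x ∈ range (a * b), f x = ∑ z ∈ range b, ∑ y ∈ range a, f (a * z + y) := by
  induction b with
  | zero => simp
  | succ b ih =>
    rw [Finset.sum_range_succ, ← ih, mul_add, mul_one, Finset.range_eq_Ico,
      ← Finset.sum_Ico_consecutive f (Nat.zero_le (a * b)) (Nat.le_add_right (a * b) a)]
    congr 1
    · rw [Finset.range_eq_Ico]
    rw [Finset.sum_Ico_eq_sum_range, show a * b + a - a * b = a by omega]

lemma sum_range_eq_sum_zmod (n : ℕ) [NeZero n] (f : ZMod n → ℂ) :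
    ∑ x ∈ range n, f (x : ZMod n) = ∑ x : ZMod n, f x := by
  apply Finset.sum_nbij' (fun x => ((x : ℕ) : ZMod n)) (fun x : ZMod n => x.val)
  · intro a _; exact Finset.mem_univ _
  · intro a _; exact Finset.mem_range.mpr (ZMod.val_lt a)
  · intro a ha; exact ZMod.val_cast_of_lt (Finset.mem_range.mp ha)
  · intro a _; simp [ZMod.natCast_val, ZMod.cast_id]
  · intro a _; rfl

noncomputable def psi (p : ℕ) (x : ZMod p) : ℂ := ee p x.val

lemma psi_intCast (p : ℕ) (hp : p ≠ 0) (t : ℤ) : psi p ((t : ZMod p)) = ee p t := by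
  haveI : NeZero p := ⟨hp⟩
  apply ee_congr p hp
  have h1 : ((((t : ZMod p).val : ℤ) - t : ℤ) : ZMod p) = 0 := by
    push_cast
    rw [ZMod.natCast_val, ZMod.cast_id]
    ring
  exact (ZMod.intCast_zmod_eq_zero_iff_dvd _ p).mp h1

lemma psi_zero (p : ℕ) (hp : p ≠ 0) : psi p 0 = 1 := by
  haveI : NeZero p := ⟨hp⟩
  simp [psi, ee, ZMod.val_zero]

lemma psi_sum (p : ℕ) [NeZero p] (hp : p.Prime) : ∑ x : ZMod p, psi p x = 0 := by
  rw [← sum_range_eq_sum_zmod]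
  have h1 : ∀ x ∈ range p, psi p ((x : ℕ) : ZMod p) = ee p ((1 : ℤ) * x) := by
    intro x _
    rw [one_mul]
    exact_mod_cast psi_intCast p hp.pos.ne' (x : ℤ)
  rw [Finset.sum_congr rfl h1, ee_geom p hp 1]
  have : ¬ (p : ℤ) ∣ 1 := by
    intro hcon
    have h2 := Int.le_of_dvd one_pos hcon
    have h3 := hp.two_le
    omega
  simp [this]
lemma zmod_flip (p : ℕ) [NeZero p] (hp : p.Prime) (c u' : ZMod p) (hc : c ≠ 0)
    (hu : ¬ IsSquare u') :
    ∑ x : ZMod p, psi p (u' * c * x ^ 2) = - ∑ x : ZMod p, psi p (c * x ^ 2) := by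
  haveI : Fact p.Prime := ⟨hp⟩
  set χ := quadraticChar (ZMod p) with hχ
  have hu0 : u' ≠ 0 := fun h => hu (h ▸ ⟨0, by simp⟩)
  have hχu : χ u' = -1 := quadraticChar_neg_one_iff_not_isSquare.mpr hu
  set H : ZMod p → ℂ := fun a => ∑ x : ZMod p, psi p (a * x ^ 2) with hH
  have hmulsq : ∀ (a t : ZMod p), t ≠ 0 → H (a * t ^ 2) = H a := by
    intro a t ht
    show (∑ x : ZMod p, psi p (a * t ^ 2 * x ^ 2)) = ∑ x : ZMod p, psi p (a * x ^ 2)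
    refine Fintype.sum_bijective (fun x => t * x) (IsUnit.isUnit_iff_mulLeft_bijective.mp (Ne.isUnit ht)) _ _ ?_
    intro x
    congr 1
    ring
  have hmul : ∀ a b : ZMod p, a ≠ 0 → b ≠ 0 → χ a = χ b → H a = H b := by
    intro a b ha hb hab
    have hsq : χ (a * b⁻¹) = 1 := by
      have hbinv : χ b * χ b⁻¹ = 1 := by
        rw [← map_mul χ, mul_inv_cancel₀ hb, map_one]
      rw [map_mul χ]
      rcases quadraticChar_dichotomy hb with h | h
      · rw [hab, h]; rw [h] at hbinv; simpa using hbinv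
      · rw [hab, h]; rw [h] at hbinv
        have h2 : χ b⁻¹ = -1 := by linarith
        rw [h2]; ring
    have hab0 : a * b⁻¹ ≠ 0 := mul_ne_zero ha (inv_ne_zero hb)
    obtain ⟨t, ht⟩ := (quadraticChar_one_iff_isSquare hab0).mp hsq
    have ht0 : t ≠ 0 := by
      intro h
      apply hab0
      rw [ht, h, mul_zero]
    have ha' : a = b * t ^ 2 := by
      field_simp at ht
      rw [sq]
      linear_combination ht
    rw [ha', hmulsq b t ht0]
  set S : Finset (ZMod p) := Finset.univ.filter (fun a => a ≠ 0) with hS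
  have hSerase : S = Finset.univ.erase 0 := by rw [hS, Finset.filter_ne']
  have hcardS : (S.card : ℂ) = (p : ℂ) - 1 := by
    rw [hSerase, Finset.card_erase_of_mem (Finset.mem_univ 0), Finset.card_univ, ZMod.card]
    push_cast [Nat.cast_sub hp.pos]
    ring
  have hmemS : ∀ a : ZMod p, a ∈ S ↔ a ≠ 0 := by
    intro a; rw [hS, Finset.mem_filter]; simp
  have hsum0 : ∑ a ∈ S, H a = 0 := by
    have hswap : ∑ a ∈ S, H a = ∑ x : ZMod p, ∑ a ∈ S, psi p (a * x ^ 2) := Finset.sum_comm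
    have hsub : ∑ b ∈ S, psi p b = -1 := by
      rw [hSerase, Finset.sum_erase_eq_sub (Finset.mem_univ 0), psi_sum p hp,
        psi_zero p hp.pos.ne']
      ring
    have hx : ∀ x : ZMod p, (∑ a ∈ S, psi p (a * x ^ 2)) = if x = 0 then ((p : ℂ) - 1) else -1 := by
      intro x
      split_ifs with h
      · subst h
        have h1 : ∀ a ∈ S, psi p (a * 0 ^ 2) = 1 := by
          intro a _
          rw [show a * 0 ^ 2 = 0 by ring, psi_zero p hp.pos.ne']
        rw [Finset.sum_congr rfl h1, Finset.sum_const, nsmul_eq_mul, mul_one, hcardS]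
      · have hx2 : x ^ 2 ≠ 0 := pow_ne_zero 2 h
        have hbij : ∑ a ∈ S, psi p (a * x ^ 2) = ∑ b ∈ S, psi p b := by
          apply Finset.sum_nbij' (fun a => a * x ^ 2) (fun b => b * (x ^ 2)⁻¹)
          · intro a ha; exact (hmemS _).mpr (mul_ne_zero ((hmemS _).mp ha) hx2)
          · intro b hb; exact (hmemS _).mpr (mul_ne_zero ((hmemS _).mp hb) (inv_ne_zero hx2))
          · intro a _; field_simp
          · intro b _; field_simp
          · intro a _; rfl
        rw [hbij, hsub]
    rw [hswap, Finset.sum_congr rfl (fun x _ => hx x),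
      ← Finset.sum_erase_add _ _ (Finset.mem_univ (0 : ZMod p)), if_pos rfl]
    have h2 : ∀ x ∈ Finset.univ.erase (0 : ZMod p),
        (if x = 0 then ((p : ℂ) - 1) else -1) = -1 := by
      intro x hx'
      rw [if_neg (Finset.ne_of_mem_erase hx')]
    rw [Finset.sum_congr rfl h2, Finset.sum_const, nsmul_eq_mul, ← hSerase, hcardS]
    ring
  have hsum0' : ∑ a ∈ S, H (u' * a) = 0 := by
    have : ∑ a ∈ S, H (u' * a) = ∑ a ∈ S, H a := by
      apply Finset.sum_nbij' (fun a => u' * a) (fun b => u'⁻¹ * b)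
      · intro a ha; exact (hmemS _).mpr (mul_ne_zero hu0 ((hmemS _).mp ha))
      · intro b hb; exact (hmemS _).mpr (mul_ne_zero (inv_ne_zero hu0) ((hmemS _).mp hb))
      · intro a _; field_simp
      · intro b _; field_simp
      · intro a _; rfl
    rw [this, hsum0]
  have hpair : ∀ a ∈ S, H a + H (u' * a) = H 1 + H u' := by
    intro a haS
    have ha : a ≠ 0 := (hmemS _).mp haS
    rcases quadraticChar_dichotomy ha with h | h
    · rw [hmul a 1 ha one_ne_zero (by rw [h, map_one]),
        hmul (u' * a) u' (mul_ne_zero hu0 ha) hu0 (by rw [map_mul, h, hχu, mul_one])]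
    · rw [hmul a u' ha hu0 (by rw [h, hχu]),
        hmul (u' * a) 1 (mul_ne_zero hu0 ha) one_ne_zero
          (by rw [map_mul, hχu, h, map_one]; ring)]
      ring
  have hkey : H 1 + H u' = 0 := by
    have h1 : ∑ a ∈ S, (H a + H (u' * a)) = 0 := by
      rw [Finset.sum_add_distrib, hsum0, hsum0']; ring
    rw [Finset.sum_congr rfl hpair, Finset.sum_const, nsmul_eq_mul] at h1
    have hcard0 : (S.card : ℂ) ≠ 0 := by
      rw [hcardS]
      intro hcon
      have : (p : ℂ) = 1 := by linear_combination hcon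
      have h4 : p = 1 := by exact_mod_cast this
      exact absurd h4 hp.one_lt.ne'
    exact (mul_eq_zero.mp h1).resolve_left hcard0
  show H (u' * c) = - H c
  rcases quadraticChar_dichotomy hc with h | h
  · rw [hmul c 1 hc one_ne_zero (by rw [h, map_one]),
      hmul (u' * c) u' (mul_ne_zero hu0 hc) hu0 (by rw [map_mul, h, hχu, mul_one])]
    linear_combination hkey
  · rw [hmul c u' hc hu0 (by rw [h, hχu]),
      hmul (u' * c) 1 (mul_ne_zero hu0 hc) one_ne_zero (by rw [map_mul, hχu, h, map_one]; ring)]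
    linear_combination hkey
lemma key_prime (p : ℕ) (hp : p.Prime) (c u : ℤ) (hc : ¬ (p : ℤ) ∣ c)
    (hu : ¬ ∃ y : ZMod p, y ^ 2 = (u : ZMod p)) :
    ∑ x ∈ range p, ee p (u * c * x ^ 2) = - ∑ x ∈ range p, ee p (c * x ^ 2) := by
  haveI : NeZero p := ⟨hp.pos.ne'⟩
  have hcast : ∀ (d : ℤ) (x : ℕ),
      ee p (d * (x : ℤ) ^ 2) = psi p ((d : ZMod p) * ((x : ℕ) : ZMod p) ^ 2) := by
    intro d x
    rw [← psi_intCast p hp.pos.ne' (d * (x : ℤ) ^ 2)]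
    congr 1
    push_cast
    ring
  have h1 : ∑ x ∈ range p, ee p (u * c * (x : ℤ) ^ 2)
      = ∑ x : ZMod p, psi p ((u : ZMod p) * (c : ZMod p) * x ^ 2) := by
    rw [← sum_range_eq_sum_zmod p (fun y => psi p ((u : ZMod p) * (c : ZMod p) * y ^ 2))]
    apply Finset.sum_congr rfl
    intro x _
    rw [hcast (u * c) x]
    push_cast
    ring_nf
  have h2 : ∑ x ∈ range p, ee p (c * (x : ℤ) ^ 2)
      = ∑ x : ZMod p, psi p ((c : ZMod p) * x ^ 2) := by
    rw [← sum_range_eq_sum_zmod p (fun y => psi p ((c : ZMod p) * y ^ 2))]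
    exact Finset.sum_congr rfl fun x _ => hcast c x
  rw [h1, h2]
  apply zmod_flip p hp _ _ _ _
  · intro hcon
    exact hc ((ZMod.intCast_zmod_eq_zero_iff_dvd c p).mp hcon)
  · intro ⟨t, ht⟩
    exact hu ⟨t, by rw [sq]; exact ht.symm⟩

lemma gauss_rec (p : ℕ) (hp : p.Prime) (c : ℤ) (hc : ¬ (p : ℤ) ∣ 2 * c) (k : ℕ) :
    ∑ x ∈ range (p ^ (k + 2)), ee (p ^ (k + 2)) (c * (x : ℤ) ^ 2)
      = p * ∑ w ∈ range (p ^ k), ee (p ^ k) (c * (w : ℤ) ^ 2) := by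
  have hp0 : p ≠ 0 := hp.pos.ne'
  have hN : p ^ (k + 2) = p ^ (k + 1) * p := by ring
  have hN' : p ^ (k + 2) ≠ 0 := pow_ne_zero _ hp0
  calc ∑ x ∈ range (p ^ (k + 2)), ee (p ^ (k + 2)) (c * (x : ℤ) ^ 2)
      = ∑ z ∈ range p, ∑ y ∈ range (p ^ (k + 1)),
          ee (p ^ (k + 2)) (c * ((p ^ (k + 1) * z + y : ℕ) : ℤ) ^ 2) := by
        rw [← sum_range_mul (fun x => ee (p ^ (k + 2)) (c * (x : ℤ) ^ 2)) (p ^ (k + 1)) p, ← hN]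
    _ = ∑ y ∈ range (p ^ (k + 1)), ∑ z ∈ range p,
          ee (p ^ (k + 2)) (c * (y : ℤ) ^ 2) * ee p ((2 * c * y) * z) := by
        rw [Finset.sum_comm]
        apply Finset.sum_congr rfl; intro y _
        apply Finset.sum_congr rfl; intro z _
        have hsplit : c * ((p ^ (k + 1) * z + y : ℕ) : ℤ) ^ 2
            = (c * (y : ℤ) ^ 2 + (2 * c * y * z) * ((p ^ (k + 1) : ℕ) : ℤ))
              + ((p ^ (k + 2) : ℕ) : ℤ) * (c * (p : ℤ) ^ k * (z : ℤ) ^ 2) := by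
          push_cast
          ring
        rw [hsplit, ee_add, ee_mul_self _ hN', mul_one, ee_add]
        congr 1
        rw [show p ^ (k + 2) = p * p ^ (k + 1) by ring]
        exact ee_cancel p (p ^ (k + 1)) (pow_ne_zero _ hp0) (2 * c * y * z)
    _ = ∑ y ∈ range (p ^ (k + 1)),
          ee (p ^ (k + 2)) (c * (y : ℤ) ^ 2) * (if (p : ℤ) ∣ (y : ℤ) then (p : ℂ) else 0) := by
        apply Finset.sum_congr rfl; intro y _
        rw [← Finset.mul_sum, ee_geom p hp (2 * c * y)]
        congr 1
        have : (p : ℤ) ∣ 2 * c * (y : ℤ) ↔ (p : ℤ) ∣ (y : ℤ) := by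
          constructor
          · intro h
            rcases (Int.Prime.dvd_mul' hp h) with h' | h'
            · exact absurd h' hc
            · exact h'
          · intro h; exact Dvd.dvd.mul_left h _
        simp [this]
    _ = ∑ z ∈ range (p ^ k), ∑ y ∈ range p,
          (ee (p ^ (k + 2)) (c * ((p * z + y : ℕ) : ℤ) ^ 2)
            * (if (p : ℤ) ∣ ((p * z + y : ℕ) : ℤ) then (p : ℂ) else 0)) := by
        rw [← sum_range_mul (fun y => ee (p ^ (k + 2)) (c * (y : ℤ) ^ 2)
          * (if (p : ℤ) ∣ (y : ℤ) then (p : ℂ) else 0)) p (p ^ k),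
          show p * p ^ k = p ^ (k + 1) by ring]
    _ = ∑ z ∈ range (p ^ k), (p : ℂ) * ee (p ^ k) (c * (z : ℤ) ^ 2) := by
        apply Finset.sum_congr rfl; intro z _
        rw [Finset.sum_eq_single_of_mem 0 (Finset.mem_range.mpr hp.pos)]
        · have hdvd : (p : ℤ) ∣ ((p * z + 0 : ℕ) : ℤ) := by
            push_cast
            simp
          rw [if_pos hdvd]
          have hee : ee (p ^ (k + 2)) (c * ((p * z + 0 : ℕ) : ℤ) ^ 2)
              = ee (p ^ k) (c * (z : ℤ) ^ 2) := by
            rw [show p ^ (k + 2) = p ^ k * p ^ 2 by ring,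
              show c * ((p * z + 0 : ℕ) : ℤ) ^ 2 = (c * (z : ℤ) ^ 2) * ((p ^ 2 : ℕ) : ℤ) by
                push_cast; ring]
            exact ee_cancel (p ^ k) (p ^ 2) (pow_ne_zero _ hp0) _
          rw [hee]
          ring
        · intro y hy hy0
          have : ¬ (p : ℤ) ∣ ((p * z + y : ℕ) : ℤ) := by
            push_cast
            intro hcon
            have h2 : (p : ℤ) ∣ (y : ℤ) := by
              have := dvd_sub hcon (Dvd.intro (z : ℤ) rfl)
              simpa using this
            have h3 : p ∣ y := Int.ofNat_dvd.mp h2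
            have := Nat.le_of_dvd (Nat.pos_of_ne_zero hy0) h3
            have := Finset.mem_range.mp hy
            omega
          rw [if_neg this, mul_zero]
    _ = p * ∑ w ∈ range (p ^ k), ee (p ^ k) (c * (w : ℤ) ^ 2) := by
        rw [Finset.mul_sum]
lemma flip_pow (p : ℕ) (hp : p.Prime) (hodd : Odd p) (c u : ℤ) (hc : ¬ (p : ℤ) ∣ c)
    (hu : ¬ ∃ y : ZMod p, y ^ 2 = (u : ZMod p)) (k : ℕ) :
    ∑ x ∈ range (p ^ k), ee (p ^ k) (u * c * (x : ℤ) ^ 2)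
      = (-1 : ℂ) ^ k * ∑ x ∈ range (p ^ k), ee (p ^ k) (c * (x : ℤ) ^ 2) := by
  have hp2 : ¬ (p : ℤ) ∣ 2 := by
    intro hcon
    have h1 : p ∣ 2 := Int.ofNat_dvd.mp (by exact_mod_cast hcon)
    have h2 : p = 2 := (Nat.prime_dvd_prime_iff_eq hp Nat.prime_two).mp h1
    rw [h2] at hodd
    exact (Nat.not_odd_iff_even.mpr (by norm_num)) hodd
  have hpu : ¬ (p : ℤ) ∣ u := by
    intro hcon
    apply hu
    refine ⟨0, ?_⟩
    rw [show ((u : ZMod p)) = 0 from (ZMod.intCast_zmod_eq_zero_iff_dvd u p).mpr hcon]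
    ring
  have h2c : ¬ (p : ℤ) ∣ 2 * c := by
    intro hcon
    rcases Int.Prime.dvd_mul' hp hcon with h | h
    exacts [hp2 h, hc h]
  have h2uc : ¬ (p : ℤ) ∣ 2 * (u * c) := by
    intro hcon
    rcases Int.Prime.dvd_mul' hp hcon with h | h
    · exact hp2 h
    · rcases Int.Prime.dvd_mul' hp h with h' | h'
      exacts [hpu h', hc h']
  induction k using Nat.strong_induction_on with
  | _ k ih =>
    match k with
    | 0 => simp [ee]
    | 1 =>
      rw [show p ^ 1 = p from pow_one p, key_prime p hp c u hc hu]
      ring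
    | (k + 2) =>
      rw [gauss_rec p hp (u * c) h2uc k, gauss_rec p hp c h2c k,
        ih k (by omega)]
      rw [pow_add]
      ring
lemma reduce (p : ℕ) (hp : p ≠ 0) (m : ℤ) (r s : ℕ) (hs : s ≤ r) :
    ∑ x ∈ range (p ^ r), ee (p ^ r) (((p : ℤ) ^ s * m) * (x : ℤ) ^ 2)
      = (p : ℂ) ^ s * ∑ x ∈ range (p ^ (r - s)), ee (p ^ (r - s)) (m * (x : ℤ) ^ 2) := by
  set P := p ^ (r - s) with hP
  have hP0 : P ≠ 0 := pow_ne_zero _ hp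
  have hPr : p ^ r = P * p ^ s := by rw [hP, ← pow_add]; congr 1; omega
  have step1 : ∀ x : ℕ, ee (p ^ r) (((p : ℤ) ^ s * m) * (x : ℤ) ^ 2)
      = ee P (m * (x : ℤ) ^ 2) := by
    intro x
    rw [hPr, show ((p : ℤ) ^ s * m) * (x : ℤ) ^ 2
        = (m * (x : ℤ) ^ 2) * ((p ^ s : ℕ) : ℤ) by push_cast; ring]
    exact ee_cancel P (p ^ s) (pow_ne_zero _ hp) _
  calc ∑ x ∈ range (p ^ r), ee (p ^ r) (((p : ℤ) ^ s * m) * (x : ℤ) ^ 2)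
      = ∑ x ∈ range (P * p ^ s), ee P (m * (x : ℤ) ^ 2) := by
        rw [← hPr]; exact Finset.sum_congr rfl fun x _ => step1 x
    _ = ∑ z ∈ range (p ^ s), ∑ y ∈ range P, ee P (m * ((P * z + y : ℕ) : ℤ) ^ 2) :=
        sum_range_mul (fun x => ee P (m * (x : ℤ) ^ 2)) P (p ^ s)
    _ = ∑ z ∈ range (p ^ s), ∑ y ∈ range P, ee P (m * (y : ℤ) ^ 2) := by
        apply Finset.sum_congr rfl; intro z _
        apply Finset.sum_congr rfl; intro y _
        apply ee_congr P hP0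
        refine ⟨m * z * ((P : ℤ) * z + 2 * y), ?_⟩
        push_cast
        ring
    _ = (p : ℂ) ^ s * ∑ x ∈ range P, ee P (m * (x : ℤ) ^ 2) := by
        rw [Finset.sum_const]
        rw [Finset.card_range, nsmul_eq_mul]
        push_cast
        ring

theorem stmt9 (p : ℕ) (hp : p.Prime) (hodd : Odd p)
    (u : ℤ) (hu : ¬ ∃ y : ZMod p, y ^ 2 = (u : ZMod p))
    (r s : ℕ) (hr : 1 ≤ r) (hs : s ≤ r) :
    (Real.sqrt (p ^ r) : ℂ)⁻¹ *
        ∑ x ∈ Finset.range (p ^ r),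
          Complex.exp (2 * Real.pi * Complex.I *
            ((p : ℂ) ^ s * ((p : ℂ) ^ r + 1) * (x : ℂ) ^ 2) / (2 * (p : ℂ) ^ r))
      = (-1 : ℂ) ^ (r - s) *
        ((Real.sqrt (p ^ r) : ℂ)⁻¹ *
          ∑ x ∈ Finset.range (p ^ r),
            Complex.exp (2 * Real.pi * Complex.I *
              ((u : ℂ) * (p : ℂ) ^ s * ((p : ℂ) ^ r + 1) * (x : ℂ) ^ 2) / (2 * (p : ℂ) ^ r))) := by
  have hp0 : p ≠ 0 := hp.pos.ne'
  have hpc : (p : ℂ) ≠ 0 := Nat.cast_ne_zero.mpr hp0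
  obtain ⟨t, ht⟩ : Even (p ^ r + 1) := Odd.add_one (hodd.pow)
  set m : ℤ := (t : ℤ) with hmdef
  have hm : (p : ℤ) ^ r + 1 = 2 * m := by
    rw [hmdef]
    exact_mod_cast (by omega : p ^ r + 1 = 2 * t)
  have hmc : (p : ℂ) ^ r + 1 = 2 * (m : ℂ) := by exact_mod_cast congrArg (Int.cast : ℤ → ℂ) hm
  have hpm : ¬ (p : ℤ) ∣ m := by
    intro hcon
    have h1 : (p : ℤ) ∣ (p : ℤ) ^ r := dvd_pow_self _ (by omega)
    have h2 : (p : ℤ) ∣ 1 := by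
      have := dvd_sub (Dvd.dvd.mul_left hcon 2) h1
      rw [← hm] at this
      simpa using this
    have h3 := Int.le_of_dvd one_pos h2
    have h4 := hp.two_le
    omega
  have hterm1 : ∀ x : ℕ,
      Complex.exp (2 * Real.pi * Complex.I *
          ((p : ℂ) ^ s * ((p : ℂ) ^ r + 1) * (x : ℂ) ^ 2) / (2 * (p : ℂ) ^ r))
        = ee (p ^ r) (((p : ℤ) ^ s * m) * (x : ℤ) ^ 2) := by
    intro x
    rw [ee]
    congr 1
    rw [hmc]
    push_cast
    rw [div_eq_div_iff (mul_ne_zero two_ne_zero (pow_ne_zero r hpc)) (pow_ne_zero r hpc)]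
    ring
  have hterm2 : ∀ x : ℕ,
      Complex.exp (2 * Real.pi * Complex.I *
          ((u : ℤ) * (p : ℂ) ^ s * ((p : ℂ) ^ r + 1) * (x : ℂ) ^ 2) / (2 * (p : ℂ) ^ r))
        = ee (p ^ r) (((p : ℤ) ^ s * (u * m)) * (x : ℤ) ^ 2) := by
    intro x
    rw [ee]
    congr 1
    rw [hmc]
    push_cast
    rw [div_eq_div_iff (mul_ne_zero two_ne_zero (pow_ne_zero r hpc)) (pow_ne_zero r hpc)]
    ring
  rw [Finset.sum_congr rfl (fun x _ => hterm1 x), Finset.sum_congr rfl (fun x _ => hterm2 x),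
    reduce p hp0 m r s hs, reduce p hp0 (u * m) r s hs,
    flip_pow p hp hodd m u hpm hu (r - s)]
  have h4 : ((-1 : ℂ)) ^ (r - s) * (-1 : ℂ) ^ (r - s) = 1 := by
    rw [← mul_pow]
    norm_num
  set A := (Real.sqrt (p ^ r) : ℂ)⁻¹
  set B := ∑ x ∈ range (p ^ (r - s)), ee (p ^ (r - s)) (m * (x : ℤ) ^ 2)
  linear_combination (-(A * (p : ℂ) ^ s * B)) * h4
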